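/- Let B ∈ ℝ³, c ∈ ℝ, and v⁺, v⁻ ∈ ℝ³. If v⁺ − v⁻ = c · ((v⁺ + v⁻) × B), then ‖v⁺‖ = ‖v⁻‖. That is, the implicit Boris rotation equation preserves the Euclidean norm of the velocity. -/

import Mathlib

/-- The cross product on `EuclideanSpace ℝ (Fin 3)`. -/
noncomputable def cross3 (a b : EuclideanSpace ℝ (Fin 3)) : EuclideanSpace ℝ (Fin 3) :=
  WithLp.toLp 2 (crossProduct (a : Fin 3 → ℝ) (b : Fin 3 → ℝ) : Fin 3 → ℝ)

/-- The implicit Boris rotation equation `v⁺ − v⁻ = c • ((v⁺ + v⁻) × B)` preserves the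
Euclidean norm of the velocity: `‖v⁺‖ = ‖v⁻‖`. -/
theorem boris_rotation_preserves_norm
    (B : EuclideanSpace ℝ (Fin 3)) (c : ℝ)
    (vplus vminus : EuclideanSpace ℝ (Fin 3))
    (h : vplus - vminus = c • cross3 (vplus + vminus) B) :
    ‖vplus‖ = ‖vminus‖ := by
  have key : inner ℝ (vplus + vminus) (vplus - vminus) = (0 : ℝ) := by
    rw [h]
    have hdot := dot_self_cross ((vplus + vminus : EuclideanSpace ℝ (Fin 3)) : Fin 3 → ℝ) (B : Fin 3 → ℝ)
    rw [real_inner_smul_right]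
    have : inner ℝ (vplus + vminus) (cross3 (vplus + vminus) B) = (0 : ℝ) := by
      rw [PiLp.inner_apply]
      simpa [dotProduct, cross3, mul_comm] using hdot
    rw [this, mul_zero]
  have h2 : inner ℝ vplus vplus - inner ℝ vminus vminus = (0 : ℝ) := by
    have := key
    rw [inner_add_left, inner_sub_right, inner_sub_right] at this
    have hs : inner ℝ vminus vplus = (inner ℝ vplus vminus : ℝ) := real_inner_comm _ _
    linarith [this, hs]
  have h3 : ‖vplus‖ ^ 2 = ‖vminus‖ ^ 2 := by
    rw [← real_inner_self_eq_norm_sq, ← real_inner_self_eq_norm_sq]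
    linarith
  nlinarith [norm_nonneg vplus, norm_nonneg vminus, h3]
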